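/- The vector h₁ is a hole of the semigroup S: h₁ lies in the subgroup of ℤ^I generated by the 16 vectors A(x), the double 2•h₁ lies in S, but h₁ itself does not lie in S. -/

import Mathlib

/-- A state of the graph `K̃₄` is a quadruple `(x₁,x₂,x₃,x₄) ∈ {0,1}⁴`,
encoded as a function `Fin 4 → Fin 2` (index `i` is vertex `i+1`). -/
abbrev K4State := Fin 4 → Fin 2

/-- The index set `I = {0,1}³ ⊕ ({1,2,3} × {0,1}²)`: triangle coordinates and
edge coordinates. -/
abbrev K4Index := (Fin 2 × Fin 2 × Fin 2) ⊕ (Fin 3 × Fin 2 × Fin 2)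

/-- The marginal map of `K̃₄`: `A x` has entry 1 at the triangle coordinate
`(x₁,x₂,x₃)`, entry 1 at the edge coordinate `(i,(x_i,x₄))` for `i ∈ {1,2,3}`,
and entry 0 elsewhere. -/
def A (x : K4State) : K4Index → ℤ
  | Sum.inl (a, b, c) => if x 0 = a ∧ x 1 = b ∧ x 2 = c then 1 else 0
  | Sum.inr (i, a, b) => if x i.castSucc = a ∧ x 3 = b then 1 else 0

/-- The additive submonoid `S` of `ℤ^I` generated by the 16 vectors `A x`. -/
def S : AddSubmonoid (K4Index → ℤ) := AddSubmonoid.closure (Set.range A)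

/-- The fundamental hole `h₁`: triangle coordinate `(a,b,c)` equal to 1 iff
`a ⊕ b ⊕ c = 0`, all twelve edge coordinates equal to 1. -/
def h₁ : K4Index → ℤ
  | Sum.inl (a, b, c) => if a + b + c = 0 then 1 else 0
  | Sum.inr _ => 1

/-- The fundamental hole `h₂`: triangle coordinate `(a,b,c)` equal to 1 iff
`a ⊕ b ⊕ c = 1`, all twelve edge coordinates equal to 1. -/
def h₂ : K4Index → ℤ
  | Sum.inl (a, b, c) => if a + b + c = 1 then 1 else 0
  | Sum.inr _ => 1

/-- The eight states whose triangle part has even parity. -/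
def hole_evens : List K4State :=
  [![0,0,0,0], ![0,0,0,1], ![0,1,1,0], ![0,1,1,1],
   ![1,0,1,0], ![1,0,1,1], ![1,1,0,0], ![1,1,0,1]]

/-- An explicit list of all 20 indices. -/
def hole_idxs : List K4Index :=
  ((List.finRange 2).flatMap fun a => (List.finRange 2).flatMap fun b =>
    (List.finRange 2).map fun c => Sum.inl (a,b,c)) ++
  ((List.finRange 3).flatMap fun i => (List.finRange 2).flatMap fun a =>
    (List.finRange 2).map fun b => Sum.inr (i,a,b))

set_option maxHeartbeats 4000000 in
lemma hole_key : (hole_evens.all fun x1 => hole_evens.all fun x2 =>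
    hole_evens.all fun x3 => hole_evens.all fun x4 =>
    !(hole_idxs.all fun j => A x1 j + A x2 j + A x3 j + A x4 j == h₁ j)) = true := by
  decide

def Tl (v : K4Index → ℤ) : ℤ := (hole_idxs.map v).sum

lemma Tl_add (u v : K4Index → ℤ) : Tl (u + v) = Tl u + Tl v := by
  unfold Tl
  generalize hole_idxs = L
  induction L with
  | nil => simp
  | cons a t ih => simp [ih]; ring

lemma Tl_A : ∀ x : K4State, Tl (A x) = 4 := by decide

lemma Tl_h₁ : Tl h₁ = 16 := by decide

lemma Tl_sum (l : List (K4Index → ℤ)) (h : ∀ y ∈ l, y ∈ Set.range A) :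
    Tl l.sum = 4 * l.length := by
  induction l with
  | nil => simpa using (by decide : Tl 0 = 0)
  | cons a t ih =>
    obtain ⟨x, hx⟩ := h a List.mem_cons_self
    simp only [List.sum_cons, Tl_add, ← hx, Tl_A, List.length_cons]
    rw [ih fun y hy => h y (List.mem_cons_of_mem a hy)]
    push_cast
    ring

lemma A_nonneg : ∀ (x : K4State) (j : K4Index), 0 ≤ A x j := by decide

lemma A_self (x : K4State) : A x (Sum.inl (x 0, x 1, x 2)) = 1 := by simp [A]

lemma h₁_odd (x : K4State) (h : x 0 + x 1 + x 2 ≠ 0) :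
    h₁ (Sum.inl (x 0, x 1, x 2)) = 0 := by simp [h₁, h]

lemma mem_evens : ∀ x : K4State, x 0 + x 1 + x 2 = 0 → x ∈ hole_evens := by decide

lemma parity_first (x1 x2 x3 x4 : K4State)
    (h : A x1 + A x2 + A x3 + A x4 = h₁) : x1 ∈ hole_evens := by
  apply mem_evens
  by_contra hp
  have hj := congrFun h (Sum.inl (x1 0, x1 1, x1 2))
  simp only [Pi.add_apply] at hj
  rw [h₁_odd x1 hp, A_self x1] at hj
  have := A_nonneg x2 (Sum.inl (x1 0, x1 1, x1 2))
  have := A_nonneg x3 (Sum.inl (x1 0, x1 1, x1 2))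
  have := A_nonneg x4 (Sum.inl (x1 0, x1 1, x1 2))
  linarith

lemma h₁_not_mem : h₁ ∉ S := by
  intro hS
  obtain ⟨l, hmem, hsum⟩ := AddSubmonoid.exists_list_of_mem_closure hS
  have hlen : l.length = 4 := by
    have := Tl_sum l hmem
    rw [hsum, Tl_h₁] at this
    omega
  rcases l with _ | ⟨v1, _ | ⟨v2, _ | ⟨v3, _ | ⟨v4, _ | ⟨v5, l⟩⟩⟩⟩⟩ <;>
    simp only [List.length] at hlen <;> try omega
  obtain ⟨x1, rfl⟩ := hmem v1 (by simp)
  obtain ⟨x2, rfl⟩ := hmem v2 (by simp)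
  obtain ⟨x3, rfl⟩ := hmem v3 (by simp)
  obtain ⟨x4, rfl⟩ := hmem v4 (by simp)
  have h : A x1 + A x2 + A x3 + A x4 = h₁ := by
    rw [← hsum]; simp [List.sum_cons]; abel
  have e1 : x1 ∈ hole_evens := parity_first x1 x2 x3 x4 h
  have e2 : x2 ∈ hole_evens := parity_first x2 x1 x3 x4 (by rw [← h]; abel)
  have e3 : x3 ∈ hole_evens := parity_first x3 x1 x2 x4 (by rw [← h]; abel)
  have e4 : x4 ∈ hole_evens := parity_first x4 x1 x2 x3 (by rw [← h]; abel)
  have k := hole_key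
  rw [List.all_eq_true] at k
  have k := (List.all_eq_true.mp (k x1 e1)) x2 e2
  have k := (List.all_eq_true.mp k) x3 e3
  have k := (List.all_eq_true.mp k) x4 e4
  rw [Bool.not_eq_true'] at k
  have : (hole_idxs.all fun j => A x1 j + A x2 j + A x3 j + A x4 j == h₁ j) = true := by
    rw [List.all_eq_true]
    intro j _
    have := congrFun h j
    simp only [Pi.add_apply] at this
    exact beq_iff_eq.mpr this
  rw [this] at k
  simp at k

/-- `h₁` is a hole of `S`: it lies in the subgroup generated by the vectors `A x`,
its double lies in `S`, but `h₁` itself does not lie in `S`. -/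
theorem h₁_is_hole :
    h₁ ∈ AddSubgroup.closure (Set.range A) ∧ 2 • h₁ ∈ S ∧ h₁ ∉ S := by

  refine ⟨?_, ?_, h₁_not_mem⟩
  · have m : ∀ x : K4State, A x ∈ AddSubgroup.closure (Set.range A) :=
      fun x => AddSubgroup.subset_closure ⟨x, rfl⟩
    rw [show h₁ = A ![0,1,1,0] + A ![1,0,1,1] + A ![1,1,0,1] + A ![0,0,0,1]
        - A ![1,0,0,1] + A ![1,0,0,0] from by decide]
    exact add_mem (sub_mem (add_mem (add_mem (add_mem (m _) (m _)) (m _)) (m _)) (m _)) (m _)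
  · have m : ∀ x : K4State, A x ∈ S :=
      fun x => AddSubmonoid.subset_closure ⟨x, rfl⟩
    rw [show 2 • h₁ = A ![0,0,0,0] + A ![0,0,0,1] + A ![0,1,1,0] + A ![0,1,1,1]
        + A ![1,0,1,0] + A ![1,0,1,1] + A ![1,1,0,0] + A ![1,1,0,1] from by decide]
    exact add_mem (add_mem (add_mem (add_mem (add_mem (add_mem (add_mem
      (m _) (m _)) (m _)) (m _)) (m _)) (m _)) (m _)) (m _)
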